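/- For any integer d ≥ 2 and any i, ℓ ∈ {0,…,d−1}, we have (1/d²)·∑_{k=0}^{d−1} csc((i−k−1/2)π/d)·csc((ℓ−k−1/2)π/d) = δ_{i,ℓ} (Kronecker delta). -/

import Mathlib

noncomputable section CscSumAux
namespace CscSum
open Complex Finset
local notation "π" => Real.pi

lemma exp_one_iff (p : ℤ) (d : ℕ) (hd : 0 < d) :
    Complex.exp (2 * π * I * p / d) = 1 ↔ (d : ℤ) ∣ p := by
  rw [Complex.exp_eq_one_iff]
  have hd' : (d : ℂ) ≠ 0 := Nat.cast_ne_zero.2 hd.ne'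
  have hpi : (π : ℂ) ≠ 0 := Complex.ofReal_ne_zero.2 Real.pi_ne_zero
  have h2 : (2 * (π:ℂ) * I : ℂ) ≠ 0 := by simp [hpi, Complex.I_ne_zero]
  constructor
  · rintro ⟨n, hn⟩
    have hc : (2*(π:ℂ)*I) * (p:ℂ) = (2*(π:ℂ)*I) * ((n:ℂ)*d) := by
      field_simp at hn
      linear_combination (2*(π:ℂ)*I) * hn
    have hz : p = n * d := by exact_mod_cast mul_left_cancel₀ h2 hc
    exact ⟨n, by rw [hz, mul_comm]⟩
  · rintro ⟨n, rfl⟩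
    refine ⟨n, ?_⟩
    push_cast
    field_simp


lemma sin_ne (d : ℕ) (hd : 0 < d) (a : ℤ) :
    Real.sin (((a:ℝ) - 1/2) * π / d) ≠ 0 := by
  rw [Real.sin_ne_zero_iff]
  intro n hn
  have hd' : (d : ℝ) ≠ 0 := Nat.cast_ne_zero.2 hd.ne'
  have hpi : π ≠ 0 := Real.pi_ne_zero
  have hr : ((2*(n*d)) : ℝ) = (2*a - 1 : ℝ) := by
    field_simp at hn
    nlinarith [hn, Real.pi_pos]
  have h2 : (2*(n*(d:ℤ)) : ℤ) = 2*a - 1 := by exact_mod_cast hr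
  have he : (2*(n*(d:ℤ))) % 2 = 0 := Int.mul_emod_right 2 _
  omega

lemma geom_zero (d : ℕ) (z : ℂ) (h1 : z ≠ 1) (hz : z ^ d = 1) :
    ∑ k ∈ Finset.range d, z ^ k = 0 := by
  rw [geom_sum_eq h1, hz]
  simp

-- inner sum over k

lemma inner_sum (d : ℕ) (hd : 0 < d) (p : ℤ) (c : ℂ)
    (hp0 : 0 < p) (hp2 : p < 2 * d) (hpd : p ≠ d) :
    ∑ k ∈ Finset.range d, Complex.exp (c + k * (2 * π * I * p / d)) = 0 := by
  have h1 : Complex.exp (2 * π * I * p / d) ≠ 1 := by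
    intro h
    have hdvd := (exp_one_iff p d hd).1 h
    rcases hdvd with ⟨c', rfl⟩
    have hd' : (0:ℤ) < d := by exact_mod_cast hd
    have hc1 : c' = 1 := by nlinarith
    subst hc1
    exact hpd (mul_one _)
  have h2 : Complex.exp (2 * π * I * p / d) ^ d = 1 := by
    rw [← Complex.exp_nat_mul]
    have hd' : (d:ℂ) ≠ 0 := Nat.cast_ne_zero.2 hd.ne'
    have : (d:ℂ) * (2 * π * I * p / d) = (p:ℤ) * (2 * π * I) := by
      field_simp
    rw [this, Complex.exp_int_mul_two_pi_mul_I]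
  calc ∑ k ∈ Finset.range d, Complex.exp (c + k * (2 * π * I * p / d))
      = Complex.exp c * ∑ k ∈ Finset.range d, Complex.exp (2 * π * I * p / d) ^ k := by
        rw [Finset.mul_sum]
        refine Finset.sum_congr rfl fun k _ => ?_
        rw [← Complex.exp_nat_mul, ← Complex.exp_add]
    _ = 0 := by rw [geom_zero d _ h1 h2, mul_zero]

def G (d : ℕ) (a : ℤ) (m : ℕ) : ℂ :=
  Complex.exp (-(I * (2*(m:ℂ)+1) * (((a:ℂ) - 1/2) * π / d)))


lemma csc_expand (d : ℕ) (hd : 0 < d) (a : ℤ) :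
    ((1 / Real.sin (((a:ℝ) - 1/2) * π / d) : ℝ) : ℂ)
      = I * ∑ m ∈ Finset.range d,
          Complex.exp (-(I * (2*(m:ℂ)+1) * (((a:ℂ) - 1/2) * π / d))) := by
  have hd' : (d : ℂ) ≠ 0 := Nat.cast_ne_zero.2 hd.ne'
  set θ : ℂ := ((a:ℂ) - 1/2) * (π:ℂ) / d with hθ
  have hθr : ((( (a:ℝ) - 1/2) * π / d : ℝ) : ℂ) = θ := by push_cast [hθ]; ring
  set q : ℂ := Complex.exp (-(2 * I * θ)) with hq
  have hqd : q ^ d = -1 := by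
    rw [hq, ← Complex.exp_nat_mul]
    have : (d:ℂ) * -(2 * I * θ) = (-a : ℤ) * (2 * π * I) + π * I := by
      rw [hθ]; push_cast; field_simp; ring
    rw [this, Complex.exp_add, Complex.exp_int_mul_two_pi_mul_I, Complex.exp_pi_mul_I]
    ring
  have hq1 : q ≠ 1 := by
    intro h
    rw [h, one_pow] at hqd
    norm_num at hqd
  have hqne : (1:ℂ) - q ≠ 0 := fun h => hq1 (by linear_combination -h)
  have hqne' : q - (1:ℂ) ≠ 0 := fun h => hq1 (by linear_combination h)
  have hsum : ∑ m ∈ Finset.range d, q ^ m = 2 / (1 - q) := by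
    rw [geom_sum_eq hq1, hqd, div_eq_div_iff hqne' hqne]
    ring
  have hterm : ∀ m ∈ Finset.range d,
      Complex.exp (-(I * (2*(m:ℂ)+1) * θ)) = Complex.exp (-(I * θ)) * q ^ m := by
    intro m _
    rw [hq, ← Complex.exp_nat_mul, ← Complex.exp_add]
    congr 1
    ring
  rw [Finset.sum_congr rfl hterm, ← Finset.mul_sum, hsum]
  have hs : Complex.sin θ ≠ 0 := by
    rw [← hθr, ← Complex.ofReal_sin]
    exact Complex.ofReal_ne_zero.2 (sin_ne d hd a)
  have hcast : ((1 / Real.sin (((a:ℝ) - 1/2) * π / d) : ℝ) : ℂ) = 1 / Complex.sin θ := by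
    push_cast [Complex.ofReal_sin, hθr]
    rfl
  rw [hcast]
  have hsin : Complex.sin θ = (Complex.exp (-θ * I) - Complex.exp (θ * I)) * I / 2 := rfl
  have he : Complex.exp (θ * I) * Complex.exp (-θ * I) = 1 := by
    rw [← Complex.exp_add]; simp
  have hq' : q = Complex.exp (-θ * I) ^ 2 := by
    rw [hq, ← Complex.exp_nat_mul]; congr 1; push_cast; ring
  have hIe : Complex.exp (-(I*θ)) = Complex.exp (-θ * I) := by ring_nf
  rw [hIe, hq', hsin]
  rw [hq'] at hqne
  set e1 := Complex.exp (θ * I) with he1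
  set e2 := Complex.exp (-θ * I) with he2
  have hdiff : (e2 - e1) * I / 2 ≠ 0 := hsin ▸ hs
  have hI : (I:ℂ) ≠ 0 := Complex.I_ne_zero
  have h21 : e2 - e1 ≠ 0 := by
    intro h
    apply hdiff
    rw [h]; ring
  have h21' : e2 * I - e1 * I ≠ 0 := by
    intro h
    apply h21
    have h2 : (e2 - e1) * I = 0 * I := by rw [zero_mul]; linear_combination h
    exact mul_right_cancel₀ Complex.I_ne_zero h2
  field_simp [h21']
  linear_combination -he - (e2^2 - e2*e1)*Complex.I_sq

lemma csc_expand' (d : ℕ) (hd : 0 < d) (a : ℤ) :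
    ((1 / Real.sin (((a:ℝ) - 1/2) * π / d) : ℝ) : ℂ)
      = I * ∑ m ∈ Finset.range d, G d a m := csc_expand d hd a

lemma keyC (d : ℕ) (hd : 2 ≤ d) (i l : Fin d) :
    ∑ k ∈ Finset.range d,
        (((1 / Real.sin (((i:ℝ) - (k:ℝ) - 1/2) * π / d))
          * (1 / Real.sin (((l:ℝ) - (k:ℝ) - 1/2) * π / d)) : ℝ) : ℂ)
      = if i = l then (d:ℂ)^2 else 0 := by
  have hd0 : 0 < d := by omega
  have hdC : (d:ℂ) ≠ 0 := Nat.cast_ne_zero.2 hd0.ne'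
  set c : ℕ → ℕ → ℂ := fun m n =>
    -(I * ((2*(m:ℂ)+1) * ((i:ℂ) - 1/2) + (2*(n:ℂ)+1) * ((l:ℂ) - 1/2)) * π / d) with hc
  set base : ℕ → ℂ := fun m =>
    Complex.exp (-(I * (2*(m:ℂ)+1) * ((i:ℂ) - (l:ℂ)) * π / d)) with hbase
  have step1 : ∑ k ∈ Finset.range d,
        (((1 / Real.sin (((i:ℝ) - (k:ℝ) - 1/2) * π / d))
          * (1 / Real.sin (((l:ℝ) - (k:ℝ) - 1/2) * π / d)) : ℝ) : ℂ)
      = -∑ m ∈ Finset.range d, ∑ n ∈ Finset.range d, ∑ k ∈ Finset.range d,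
          Complex.exp (c m n + k * (2 * π * I * ((m:ℂ)+(n:ℂ)+1) / d)) := by
    have hswap : ∑ k ∈ Finset.range d, ∑ m ∈ Finset.range d, ∑ n ∈ Finset.range d,
          Complex.exp (c m n + k * (2 * π * I * ((m:ℂ)+(n:ℂ)+1) / d))
        = ∑ m ∈ Finset.range d, ∑ n ∈ Finset.range d, ∑ k ∈ Finset.range d,
          Complex.exp (c m n + k * (2 * π * I * ((m:ℂ)+(n:ℂ)+1) / d)) := by
      rw [Finset.sum_comm]
      exact Finset.sum_congr rfl fun m _ => Finset.sum_comm
    rw [← hswap, ← Finset.sum_neg_distrib]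
    refine Finset.sum_congr rfl fun k hk => ?_
    have harg1 : ((i:ℝ) - (k:ℝ) - 1/2) * π / d = ((((i:ℤ) - (k:ℤ) : ℤ):ℝ) - 1/2) * π / d := by
      push_cast; ring
    have harg2 : ((l:ℝ) - (k:ℝ) - 1/2) * π / d = ((((l:ℤ) - (k:ℤ) : ℤ):ℝ) - 1/2) * π / d := by
      push_cast; ring
    rw [Complex.ofReal_mul, harg1, harg2, csc_expand' d hd0, csc_expand' d hd0]
    have hprod : ∀ m ∈ Finset.range d, ∀ n ∈ Finset.range d,
        G d ((i:ℤ) - (k:ℤ)) m * G d ((l:ℤ) - (k:ℤ)) n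
          = Complex.exp (c m n + k * (2 * π * I * ((m:ℂ)+(n:ℂ)+1) / d)) := by
      intro m _ n _
      rw [G, G, ← Complex.exp_add, hc]
      congr 1
      push_cast
      field_simp
      ring
    calc (I * ∑ m ∈ Finset.range d, G d ((i:ℤ) - (k:ℤ)) m)
          * (I * ∑ n ∈ Finset.range d, G d ((l:ℤ) - (k:ℤ)) n)
        = (I * I) * ((∑ m ∈ Finset.range d, G d ((i:ℤ) - (k:ℤ)) m)
            * ∑ n ∈ Finset.range d, G d ((l:ℤ) - (k:ℤ)) n) := by ring
      _ = -((∑ m ∈ Finset.range d, G d ((i:ℤ) - (k:ℤ)) m)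
            * ∑ n ∈ Finset.range d, G d ((l:ℤ) - (k:ℤ)) n) := by
          rw [Complex.I_mul_I]; ring
      _ = -(∑ m ∈ Finset.range d, ∑ n ∈ Finset.range d,
            G d ((i:ℤ) - (k:ℤ)) m * G d ((l:ℤ) - (k:ℤ)) n) := by
          rw [Finset.sum_mul_sum]
      _ = -(∑ m ∈ Finset.range d, ∑ n ∈ Finset.range d,
            Complex.exp (c m n + k * (2 * π * I * ((m:ℂ)+(n:ℂ)+1) / d))) := by
          congr 1
          refine Finset.sum_congr rfl fun m hm => Finset.sum_congr rfl fun n hn => ?_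
          exact hprod m hm n hn
  rw [step1]
  -- collapse n-sum
  have step2 : ∀ m ∈ Finset.range d,
      ∑ n ∈ Finset.range d, ∑ k ∈ Finset.range d,
          Complex.exp (c m n + k * (2 * π * I * ((m:ℂ)+(n:ℂ)+1) / d))
        = -((d:ℂ) * base m) := by
    intro m hm
    have hmd : m < d := Finset.mem_range.1 hm
    have hmem : d - 1 - m ∈ Finset.range d := Finset.mem_range.2 (by omega)
    rw [Finset.sum_eq_single_of_mem (d - 1 - m) hmem]
    · -- value at n₀ = d - 1 - m
      have hsum : (m:ℂ) + ((d - 1 - m : ℕ):ℂ) + 1 = (d:ℂ) := by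
        have : m + (d - 1 - m) + 1 = d := by omega
        calc (m:ℂ) + ((d - 1 - m : ℕ):ℂ) + 1 = ((m + (d - 1 - m) + 1 : ℕ) : ℂ) := by push_cast; ring
          _ = (d:ℂ) := by rw [this]
      have hk : ∀ k ∈ Finset.range d,
          Complex.exp (c m (d-1-m) + k * (2 * π * I * ((m:ℂ)+((d-1-m:ℕ):ℂ)+1) / d))
            = Complex.exp (c m (d-1-m)) := by
        intro k _
        rw [hsum]
        rw [mul_div_assoc, div_self hdC, mul_one]
        rw [Complex.exp_add]
        have : Complex.exp ((k:ℂ) * (2 * π * I)) = 1 := by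
          exact_mod_cast Complex.exp_int_mul_two_pi_mul_I (k:ℤ)
        rw [this, mul_one]
      rw [Finset.sum_congr rfl hk, Finset.sum_const, Finset.card_range, nsmul_eq_mul]
      -- exp (c m n₀) = - base m
      have hcval : Complex.exp (c m (d - 1 - m)) = -(base m) := by
        have hn0 : ((d - 1 - m : ℕ):ℂ) = (d:ℂ) - 1 - (m:ℂ) := by
          have h1 : m ≤ d - 1 := by omega
          have h2 : 1 ≤ d := by omega
          push_cast [Nat.cast_sub h1, Nat.cast_sub h2]
          ring
        have hcsplit : c m (d - 1 - m)
            = -(I * (2*(m:ℂ)+1) * ((i:ℂ) - (l:ℂ)) * π / d)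
              + ((-(l:ℤ) : ℤ) : ℂ) * (2 * π * I) + π * I := by
          rw [hc]
          simp only
          rw [hn0]
          push_cast
          field_simp
          ring
        rw [hcsplit, Complex.exp_add, Complex.exp_add,
            Complex.exp_int_mul_two_pi_mul_I, Complex.exp_pi_mul_I, hbase]
        ring
      rw [hcval]
      ring
    · -- other n vanish
      intro n hn hne
      have hnd : n < d := Finset.mem_range.1 hn
      have hcast : ((m:ℂ)+(n:ℂ)+1) = (((m + n + 1 : ℕ) : ℤ) : ℂ) := by push_cast; ring
      simp only [hcast]
      exact inner_sum d hd0 ((m + n + 1 : ℕ) : ℤ) (c m n)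
        (by positivity) (by exact_mod_cast (by omega : m + n + 1 < 2 * d))
        (by exact_mod_cast (by omega : m + n + 1 ≠ d))
  rw [Finset.sum_congr rfl step2]
  -- now: -∑ m, -(d * base m) = d * ∑ base m
  have step3 : -∑ m ∈ Finset.range d, -((d:ℂ) * base m)
      = (d:ℂ) * ∑ m ∈ Finset.range d, base m := by
    rw [Finset.sum_neg_distrib, neg_neg, Finset.mul_sum]
  rw [step3]
  by_cases hil : i = l
  · rw [if_pos hil]
    have : ∀ m ∈ Finset.range d, base m = 1 := by
      intro m _
      rw [hbase]
      simp only
      rw [hil]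
      simp
    rw [Finset.sum_congr rfl this, Finset.sum_const, Finset.card_range, nsmul_eq_mul, mul_one]
    ring
  · rw [if_neg hil]
    set u : ℂ := Complex.exp (2 * π * I * (((l:ℤ) - (i:ℤ) : ℤ) : ℂ) / d) with hu
    have hbase_eq : ∀ m ∈ Finset.range d,
        base m = Complex.exp (-(I * ((i:ℂ) - (l:ℂ)) * π / d)) * u ^ m := by
      intro m _
      rw [hbase, hu]
      simp only
      rw [← Complex.exp_nat_mul, ← Complex.exp_add]
      congr 1
      push_cast
      field_simp
      ring
    have hu1 : u ≠ 1 := by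
      intro h
      rw [hu] at h
      have := (exp_one_iff ((l:ℤ) - (i:ℤ)) d hd0).1 h
      have h1 : (i:ℕ) < d := i.isLt
      have h2 : (l:ℕ) < d := l.isLt
      have h3 : (i:ℕ) ≠ (l:ℕ) := fun hh => hil (Fin.ext hh)
      have hz : (l:ℤ) - (i:ℤ) = 0 := Int.eq_zero_of_abs_lt_dvd this (by rw [abs_lt]; omega)
      omega
    have hud : u ^ d = 1 := by
      rw [hu, ← Complex.exp_nat_mul]
      have : (d:ℂ) * (2 * π * I * (((l:ℤ) - (i:ℤ) : ℤ) : ℂ) / d)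
          = (((l:ℤ) - (i:ℤ) : ℤ) : ℂ) * (2 * π * I) := by
        field_simp
      rw [this, Complex.exp_int_mul_two_pi_mul_I]
    rw [Finset.sum_congr rfl hbase_eq, ← Finset.mul_sum, geom_zero d u hu1 hud]
    ring


end CscSum
end CscSumAux

/-- For integer `d ≥ 2` and `i, ℓ ∈ {0,…,d−1}`,
`(1/d²) ∑_{k<d} csc((i−k−1/2)π/d) csc((ℓ−k−1/2)π/d) = δ_{i,ℓ}`. -/
theorem csc_sum_orthonormal (d : ℕ) (hd : 2 ≤ d) (i l : Fin d) :
    (1 / (d : ℝ) ^ 2) * ∑ k ∈ Finset.range d,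
      (1 / Real.sin (((i : ℝ) - (k : ℝ) - 1 / 2) * Real.pi / d)) *
        (1 / Real.sin (((l : ℝ) - (k : ℝ) - 1 / 2) * Real.pi / d)) =
      if i = l then 1 else 0 := by
  have hd0 : 0 < d := by omega
  have hdR : ((d:ℝ)^2) ≠ 0 := by positivity
  have key := CscSum.keyC d hd i l
  have hre : (∑ k ∈ Finset.range d,
      (1 / Real.sin (((i : ℝ) - (k : ℝ) - 1 / 2) * Real.pi / d)) *
        (1 / Real.sin (((l : ℝ) - (k : ℝ) - 1 / 2) * Real.pi / d)))
      = if i = l then (d:ℝ)^2 else 0 := by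
    apply Complex.ofReal_injective
    rw [Complex.ofReal_sum, key]
    split_ifs <;> norm_num
  rw [hre]
  split_ifs
  · field_simp
  · simp
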